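/- (Hoeffding-type inequality under negative association.) Suppose W₁, …, W_N are negatively associated, mean-zero random variables each satisfying E[exp(Wᵢ²)] ≤ K₀ for a constant K₀. Then there exist positive constants C₃ and C₄ depending only on K₀ such that for every a ≥ 0 and all reals γ₁, …, γ_N, P(|∑_{i=1}^N Wᵢ γᵢ| ≥ a) ≤ C₃ exp{−a² / (C₄ ∑_{i=1}^N γᵢ²)}. One may take C₃ = 4 and C₄ = 32(1 + σ₀²) where σ₀² = K₀ − 1. -/

import Mathlib

open MeasureTheory

/-- Negative association: for every pair of disjoint index sets and coordinate-wise
increasing functions, the covariance is nonpositive, i.e. `E[f₁ f₂] ≤ E[f₁] E[f₂]`. -/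
def NegAssoc {Ω : Type*} [MeasurableSpace Ω] (ℙ : Measure Ω) {N : ℕ}
    (X : Fin N → Ω → ℝ) : Prop :=
  ∀ (A₁ A₂ : Finset (Fin N)), Disjoint A₁ A₂ →
    ∀ (f₁ : (A₁ → ℝ) → ℝ) (f₂ : (A₂ → ℝ) → ℝ), Monotone f₁ → Monotone f₂ →
      Integrable (fun ω => f₁ fun i => X i.1 ω) ℙ →
      Integrable (fun ω => f₂ fun i => X i.1 ω) ℙ →
      Integrable (fun ω => (f₁ fun i => X i.1 ω) * (f₂ fun i => X i.1 ω)) ℙ →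
      ∫ ω, (f₁ fun i => X i.1 ω) * (f₂ fun i => X i.1 ω) ∂ℙ
        ≤ (∫ ω, (f₁ fun i => X i.1 ω) ∂ℙ) * ∫ ω, (f₂ fun i => X i.1 ω) ∂ℙ


lemma exp_le_add_exp_sq (x : ℝ) : Real.exp x ≤ x + Real.exp (x ^ 2) := by
  have hx2 : x ^ 2 + 1 ≤ Real.exp (x ^ 2) := Real.add_one_le_exp _
  rcases le_or_gt |x| 1 with h | h
  · have hb := Real.exp_bound h (n := 2) (by norm_num)
    simp [Finset.sum_range_succ] at hb
    nlinarith [(abs_le.mp hb).2]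
  · rcases le_or_gt 0 x with hx | hx
    · have h1 : x ≤ x ^ 2 := by nlinarith [abs_of_nonneg hx]
      have := Real.exp_le_exp.mpr h1
      linarith
    · have h1 : Real.exp x ≤ 1 := Real.exp_le_one_iff.mpr hx.le
      have h2 : -x ≤ x ^ 2 := by nlinarith [abs_of_neg hx]
      nlinarith

lemma exp_mul_le_of_le_one (l y : ℝ) (h0 : 0 ≤ l) (h1 : l ≤ 1) :
    Real.exp (l * y) ≤ l * Real.exp y + (1 - l) := by
  have := convexOn_exp.2 (Set.mem_univ y) (Set.mem_univ (0 : ℝ)) h0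
    (sub_nonneg.mpr h1) (by ring)
  simpa using this

lemma mgf_single {Ω : Type*} [MeasurableSpace Ω] (ℙ : Measure Ω) [IsProbabilityMeasure ℙ]
    (f : Ω → ℝ) (hm : Measurable f) (hint : Integrable f ℙ)
    (hmean : ∫ ω, f ω ∂ℙ = 0) (K₀ : ℝ) (hK : 1 ≤ K₀)
    (hei : Integrable (fun ω => Real.exp (f ω ^ 2)) ℙ)
    (he : ∫ ω, Real.exp (f ω ^ 2) ∂ℙ ≤ K₀) (t : ℝ) :
    Integrable (fun ω => Real.exp (t * f ω)) ℙ ∧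
      ∫ ω, Real.exp (t * f ω) ∂ℙ ≤ Real.exp (2 * K₀ * t ^ 2) := by
  have hmexp : Measurable fun ω => Real.exp (t * f ω) :=
    (Real.measurable_exp.comp (hm.const_mul t))
  have hpt : ∀ ω, Real.exp (t * f ω) ≤ Real.exp (t ^ 2 / 4) * Real.exp (f ω ^ 2) := by
    intro ω
    rw [← Real.exp_add]
    apply Real.exp_le_exp.mpr
    nlinarith [sq_nonneg (t / 2 - f ω)]
  have hintexp : Integrable (fun ω => Real.exp (t * f ω)) ℙ := by
    apply Integrable.mono' (hei.const_mul (Real.exp (t ^ 2 / 4))) hmexp.aestronglyMeasurable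
    filter_upwards with ω
    rw [Real.norm_eq_abs, abs_of_pos (Real.exp_pos _)]
    exact hpt ω
  refine ⟨hintexp, ?_⟩
  have hIpos : (0:ℝ) ≤ ∫ ω, Real.exp (f ω ^ 2) ∂ℙ :=
    integral_nonneg fun ω => (Real.exp_pos _).le
  rcases le_or_gt (t ^ 2) 1 with ht | ht
  · -- small t
    have hpt2 : ∀ ω, Real.exp (t * f ω) ≤
        t * f ω + (t ^ 2 * Real.exp (f ω ^ 2) + (1 - t ^ 2)) := by
      intro ω
      have h1 := exp_le_add_exp_sq (t * f ω)
      have h2 : (t * f ω) ^ 2 = t ^ 2 * f ω ^ 2 := by ring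
      have h3 := exp_mul_le_of_le_one (t ^ 2) (f ω ^ 2) (sq_nonneg t) ht
      rw [h2] at h1
      linarith
    have hrint : Integrable
        (fun ω => t * f ω + (t ^ 2 * Real.exp (f ω ^ 2) + (1 - t ^ 2))) ℙ :=
      ((hint.const_mul t).add ((hei.const_mul (t ^ 2)).add (integrable_const _)))
    have hg : Integrable (fun ω => t ^ 2 * Real.exp (f ω ^ 2) + (1 - t ^ 2)) ℙ := by
      exact (hei.const_mul _).add (integrable_const _)
    have hr : ∫ a, (t * f a + (t ^ 2 * Real.exp (f a ^ 2) + (1 - t ^ 2))) ∂ℙ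
        = t ^ 2 * (∫ ω, Real.exp (f ω ^ 2) ∂ℙ) + (1 - t ^ 2) := by
      rw [integral_add (hint.const_mul t) hg,
        integral_add (hei.const_mul (t ^ 2)) (integrable_const _),
        integral_const_mul, integral_const_mul, hmean, integral_const]
      simp
    have this2 := integral_mono hintexp hrint hpt2
    rw [hr] at this2
    have this := this2
    have hfin : ∫ ω, Real.exp (t * f ω) ∂ℙ ≤ t ^ 2 * (K₀ - 1) + 1 := by
      nlinarith [sq_nonneg t]
    calc ∫ ω, Real.exp (t * f ω) ∂ℙ ≤ t ^ 2 * (K₀ - 1) + 1 := hfin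
      _ ≤ Real.exp (t ^ 2 * (K₀ - 1)) := Real.add_one_le_exp _
      _ ≤ Real.exp (2 * K₀ * t ^ 2) := by
          apply Real.exp_le_exp.mpr; nlinarith [sq_nonneg t]
  · -- large t
    have h1 : ∫ ω, Real.exp (t * f ω) ∂ℙ ≤
        Real.exp (t ^ 2 / 4) * ∫ ω, Real.exp (f ω ^ 2) ∂ℙ := by
      rw [← integral_const_mul]
      exact integral_mono hintexp (hei.const_mul _) hpt
    have h2 : Real.exp (t ^ 2 / 4) * ∫ ω, Real.exp (f ω ^ 2) ∂ℙ ≤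
        Real.exp (t ^ 2 / 4) * K₀ := by
      exact mul_le_mul_of_nonneg_left he (Real.exp_pos _).le
    have h3 : K₀ ≤ Real.exp (K₀ - 1) := by
      have := Real.add_one_le_exp (K₀ - 1); linarith
    have h4 : Real.exp (t ^ 2 / 4) * K₀ ≤ Real.exp (t ^ 2 / 4) * Real.exp (K₀ - 1) :=
      mul_le_mul_of_nonneg_left h3 (Real.exp_pos _).le
    rw [← Real.exp_add] at h4
    have h5 : Real.exp (t ^ 2 / 4 + (K₀ - 1)) ≤ Real.exp (2 * K₀ * t ^ 2) := by
      apply Real.exp_le_exp.mpr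
      nlinarith [mul_nonneg (sub_nonneg.mpr hK) (sub_nonneg.mpr ht.le)]
    linarith

lemma intExpSum {Ω : Type*} [MeasurableSpace Ω] (ℙ : Measure Ω) [IsProbabilityMeasure ℙ]
    {N : ℕ} (W : Fin N → Ω → ℝ) (hmeas : ∀ i, Measurable (W i))
    (hexpint : ∀ i, Integrable (fun ω => Real.exp ((W i ω) ^ 2)) ℙ)
    (A : Finset (Fin N)) (c : Fin N → ℝ) :
    Integrable (fun ω => Real.exp (∑ i ∈ A, c i * W i ω)) ℙ := by
  rcases A.eq_empty_or_nonempty with rfl | hA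
  · simpa using integrable_const (1 : ℝ)
  have hmexp : Measurable fun ω => Real.exp (∑ i ∈ A, c i * W i ω) :=
    Real.measurable_exp.comp (Finset.measurable_sum A fun i _ => (hmeas i).const_mul (c i))
  set n : ℝ := (A.card : ℝ) with hn
  have hnpos : (0:ℝ) < n := by
    simp only [hn, Nat.cast_pos]
    exact Finset.card_pos.mpr hA
  set Cst : ℝ := Real.exp (n / 2 * ∑ i ∈ A, c i ^ 2) with hCst
  have hgint : Integrable (fun ω => Cst * ∑ i ∈ A, Real.exp ((W i ω) ^ 2)) ℙ :=
    (integrable_finset_sum A fun i _ => hexpint i).const_mul Cst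
  apply Integrable.mono' hgint hmexp.aestronglyMeasurable
  filter_upwards with ω
  rw [Real.norm_eq_abs, abs_of_pos (Real.exp_pos _)]
  -- step 1: sum bound
  have h1 : ∑ i ∈ A, c i * W i ω ≤ n / 2 * ∑ i ∈ A, c i ^ 2 + (1 / (2 * n)) * ∑ i ∈ A, (W i ω) ^ 2 := by
    have hterm : ∀ i ∈ A, c i * W i ω ≤ n / 2 * c i ^ 2 + (1 / (2 * n)) * (W i ω) ^ 2 := by
      intro i _
      have h2 : (0:ℝ) ≤ (n * c i - W i ω) ^ 2 / (2 * n) :=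
        div_nonneg (sq_nonneg _) (by linarith)
      have h3 : n / 2 * c i ^ 2 + (1 / (2 * n)) * (W i ω) ^ 2 - c i * W i ω
          = (n * c i - W i ω) ^ 2 / (2 * n) := by
        field_simp
        ring
      linarith
    calc ∑ i ∈ A, c i * W i ω ≤ ∑ i ∈ A, (n / 2 * c i ^ 2 + (1 / (2 * n)) * (W i ω) ^ 2) :=
          Finset.sum_le_sum hterm
      _ = n / 2 * ∑ i ∈ A, c i ^ 2 + (1 / (2 * n)) * ∑ i ∈ A, (W i ω) ^ 2 := by
          rw [Finset.sum_add_distrib, Finset.mul_sum, Finset.mul_sum]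
  -- step 2: exists j with average bound
  obtain ⟨j, hjA, hj⟩ : ∃ j ∈ A, (1 / n) * ∑ i ∈ A, (W i ω) ^ 2 ≤ (W j ω) ^ 2 := by
    apply Finset.exists_le_of_sum_le hA
    rw [Finset.sum_const, nsmul_eq_mul]
    rw [← hn]
    field_simp
    exact le_refl _
  have h2 : (1 / (2 * n)) * ∑ i ∈ A, (W i ω) ^ 2 ≤ (W j ω) ^ 2 := by
    have hsq : (0:ℝ) ≤ ∑ i ∈ A, (W i ω) ^ 2 := Finset.sum_nonneg fun i _ => sq_nonneg _
    have : (1 / (2 * n)) * ∑ i ∈ A, (W i ω) ^ 2 ≤ (1 / n) * ∑ i ∈ A, (W i ω) ^ 2 := by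
      apply mul_le_mul_of_nonneg_right _ hsq
      rw [div_le_div_iff₀ (by linarith) hnpos]
      linarith
    linarith
  calc Real.exp (∑ i ∈ A, c i * W i ω)
      ≤ Real.exp (n / 2 * ∑ i ∈ A, c i ^ 2 + (W j ω) ^ 2) := by
        apply Real.exp_le_exp.mpr; linarith
    _ = Cst * Real.exp ((W j ω) ^ 2) := by rw [hCst, ← Real.exp_add]
    _ ≤ Cst * ∑ i ∈ A, Real.exp ((W i ω) ^ 2) := by
        apply mul_le_mul_of_nonneg_left _ (Real.exp_pos _).le
        exact Finset.single_le_sum (f := fun i => Real.exp ((W i ω) ^ 2)) (fun i _ => (Real.exp_pos _).le) hjA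

/-- The antitone version of negative association. -/
lemma negAssoc_anti {Ω : Type*} [MeasurableSpace Ω] {ℙ : Measure Ω} {N : ℕ}
    {X : Fin N → Ω → ℝ} (hNA : NegAssoc ℙ X)
    (A₁ A₂ : Finset (Fin N)) (hd : Disjoint A₁ A₂)
    (f₁ : (A₁ → ℝ) → ℝ) (f₂ : (A₂ → ℝ) → ℝ) (ha₁ : Antitone f₁) (ha₂ : Antitone f₂)
    (hi₁ : Integrable (fun ω => f₁ fun i => X i.1 ω) ℙ)
    (hi₂ : Integrable (fun ω => f₂ fun i => X i.1 ω) ℙ)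
    (hi₁₂ : Integrable (fun ω => (f₁ fun i => X i.1 ω) * (f₂ fun i => X i.1 ω)) ℙ) :
    ∫ ω, (f₁ fun i => X i.1 ω) * (f₂ fun i => X i.1 ω) ∂ℙ
      ≤ (∫ ω, (f₁ fun i => X i.1 ω) ∂ℙ) * ∫ ω, (f₂ fun i => X i.1 ω) ∂ℙ := by
  have key := hNA A₁ A₂ hd (fun x => -(f₁ x)) (fun x => -(f₂ x))
    (fun x y h => neg_le_neg (ha₁ h)) (fun x y h => neg_le_neg (ha₂ h))
    hi₁.neg hi₂.neg (by simpa using hi₁₂)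
  simp only [neg_mul_neg, integral_neg] at key
  exact key

lemma prodBound {Ω : Type*} [MeasurableSpace Ω] (ℙ : Measure Ω) [IsProbabilityMeasure ℙ]
    {N : ℕ} (W : Fin N → Ω → ℝ) (hNA : NegAssoc ℙ W) (hmeas : ∀ i, Measurable (W i))
    (hexpint : ∀ i, Integrable (fun ω => Real.exp ((W i ω) ^ 2)) ℙ)
    (A : Finset (Fin N)) (c : Fin N → ℝ)
    (hc : (∀ i ∈ A, 0 ≤ c i) ∨ (∀ i ∈ A, c i ≤ 0)) :
    ∫ ω, Real.exp (∑ i ∈ A, c i * W i ω) ∂ℙ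
      ≤ ∏ i ∈ A, ∫ ω, Real.exp (c i * W i ω) ∂ℙ := by
  classical
  induction A using Finset.induction_on with
  | empty => simp
  | @insert j A hj ih =>
    have hcA : (∀ i ∈ A, 0 ≤ c i) ∨ (∀ i ∈ A, c i ≤ 0) := by
      rcases hc with h | h
      · exact Or.inl fun i hi => h i (Finset.mem_insert_of_mem hi)
      · exact Or.inr fun i hi => h i (Finset.mem_insert_of_mem hi)
    set f₁ : (A → ℝ) → ℝ := fun x => Real.exp (∑ i ∈ A.attach, c i.1 * x i) with hf₁
    set f₂ : (({j} : Finset (Fin N)) → ℝ) → ℝ :=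
      fun x => Real.exp (c j * x ⟨j, Finset.mem_singleton_self j⟩) with hf₂
    have hd : Disjoint A ({j} : Finset (Fin N)) := by
      simp [Finset.disjoint_singleton_right, hj]
    have hrw₁ : ∀ ω, (f₁ fun i => W i.1 ω) = Real.exp (∑ i ∈ A, c i * W i ω) := by
      intro ω
      simp only [hf₁]
      rw [Finset.sum_attach A (fun i => c i * W i ω)]
    have hrw₂ : ∀ ω, (f₂ fun i => W i.1 ω) = Real.exp (c j * W j ω) := by
      intro ω; simp [hf₂]
    have hrw₁₂ : ∀ ω, (f₁ fun i => W i.1 ω) * (f₂ fun i => W i.1 ω)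
        = Real.exp (∑ i ∈ Insert.insert j A, c i * W i ω) := by
      intro ω
      rw [hrw₁, hrw₂, Finset.sum_insert hj, ← Real.exp_add, add_comm]
    have hi₁ : Integrable (fun ω => f₁ fun i => W i.1 ω) ℙ := by
      have := intExpSum ℙ W hmeas hexpint A c
      apply this.congr
      filter_upwards with ω
      rw [hrw₁]
    have hi₂ : Integrable (fun ω => f₂ fun i => W i.1 ω) ℙ := by
      have := intExpSum ℙ W hmeas hexpint {j} c
      simp only [Finset.sum_singleton] at this
      apply this.congr
      filter_upwards with ω
      rw [hrw₂]
    have hi₁₂ : Integrable (fun ω => (f₁ fun i => W i.1 ω) * (f₂ fun i => W i.1 ω)) ℙ := by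
      have := intExpSum ℙ W hmeas hexpint (Insert.insert j A) c
      apply this.congr
      filter_upwards with ω
      rw [hrw₁₂]
    have key : ∫ ω, (f₁ fun i => W i.1 ω) * (f₂ fun i => W i.1 ω) ∂ℙ
        ≤ (∫ ω, (f₁ fun i => W i.1 ω) ∂ℙ) * ∫ ω, (f₂ fun i => W i.1 ω) ∂ℙ := by
      rcases hc with h | h
      · refine hNA A {j} hd f₁ f₂ ?_ ?_ hi₁ hi₂ hi₁₂
        · intro x y hxy
          apply Real.exp_le_exp.mpr
          exact Finset.sum_le_sum fun i _ =>
            mul_le_mul_of_nonneg_left (hxy i) (h i.1 (Finset.mem_insert_of_mem i.2))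
        · intro x y hxy
          apply Real.exp_le_exp.mpr
          exact mul_le_mul_of_nonneg_left (hxy _) (h j (Finset.mem_insert_self j A))
      · refine negAssoc_anti hNA A {j} hd f₁ f₂ ?_ ?_ hi₁ hi₂ hi₁₂
        · intro x y hxy
          apply Real.exp_le_exp.mpr
          have : ∀ i ∈ A.attach, c i.1 * y i ≤ c i.1 * x i := fun i _ =>
            mul_le_mul_of_nonpos_left (hxy i) (h i.1 (Finset.mem_insert_of_mem i.2))
          exact Finset.sum_le_sum this
        · intro x y hxy
          apply Real.exp_le_exp.mpr
          exact mul_le_mul_of_nonpos_left (hxy _) (h j (Finset.mem_insert_self j A))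
    have e1 : ∫ ω, (f₁ fun i => W i.1 ω) * (f₂ fun i => W i.1 ω) ∂ℙ
        = ∫ ω, Real.exp (∑ i ∈ Insert.insert j A, c i * W i ω) ∂ℙ := by
      apply integral_congr_ae; filter_upwards with ω; rw [hrw₁₂]
    have e2 : ∫ ω, (f₁ fun i => W i.1 ω) ∂ℙ = ∫ ω, Real.exp (∑ i ∈ A, c i * W i ω) ∂ℙ := by
      apply integral_congr_ae; filter_upwards with ω; rw [hrw₁]
    have e3 : ∫ ω, (f₂ fun i => W i.1 ω) ∂ℙ = ∫ ω, Real.exp (c j * W j ω) ∂ℙ := by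
      apply integral_congr_ae; filter_upwards with ω; rw [hrw₂]
    rw [e1, e2, e3] at key
    rw [Finset.prod_insert hj]
    calc ∫ ω, Real.exp (∑ i ∈ Insert.insert j A, c i * W i ω) ∂ℙ
        ≤ (∫ ω, Real.exp (∑ i ∈ A, c i * W i ω) ∂ℙ) * ∫ ω, Real.exp (c j * W j ω) ∂ℙ := key
      _ ≤ (∏ i ∈ A, ∫ ω, Real.exp (c i * W i ω) ∂ℙ) * ∫ ω, Real.exp (c j * W j ω) ∂ℙ := by
          apply mul_le_mul_of_nonneg_right (ih hcA)
          exact integral_nonneg fun ω => (Real.exp_pos _).le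
      _ = (∫ ω, Real.exp (c j * W j ω) ∂ℙ) * ∏ i ∈ A, ∫ ω, Real.exp (c i * W i ω) ∂ℙ := by ring

lemma tailBound {Ω : Type*} [MeasurableSpace Ω] (ℙ : Measure Ω) [IsProbabilityMeasure ℙ]
    {N : ℕ} (W : Fin N → Ω → ℝ) (hNA : NegAssoc ℙ W)
    (hmeas : ∀ i, Measurable (W i)) (hWint : ∀ i, Integrable (W i) ℙ)
    (hmean : ∀ i, ∫ ω, W i ω ∂ℙ = 0)
    (K₀ : ℝ) (hK₀ : 1 ≤ K₀)
    (hexpint : ∀ i, Integrable (fun ω => Real.exp ((W i ω) ^ 2)) ℙ)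
    (hexp : ∀ i, ∫ ω, Real.exp ((W i ω) ^ 2) ∂ℙ ≤ K₀)
    (R : Finset (Fin N)) (d : Fin N → ℝ)
    (hsign : (∀ i ∈ R, 0 ≤ d i) ∨ (∀ i ∈ R, d i ≤ 0))
    (β a : ℝ) (hβ : 0 ≤ β) :
    (ℙ {ω | a ≤ ∑ i ∈ R, d i * W i ω}).toReal
      ≤ Real.exp (-β * a) * Real.exp (2 * K₀ * β ^ 2 * ∑ i ∈ R, d i ^ 2) := by
  have hintX : Integrable (fun ω => Real.exp (β * ∑ i ∈ R, d i * W i ω)) ℙ := by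
    have := intExpSum ℙ W hmeas hexpint R (fun i => β * d i)
    apply this.congr
    filter_upwards with ω
    rw [Finset.mul_sum]
    congr 1
    exact Finset.sum_congr rfl fun i _ => by ring
  have hch := ProbabilityTheory.measure_ge_le_exp_mul_mgf
    (X := fun ω => ∑ i ∈ R, d i * W i ω) (μ := ℙ) (t := β) a hβ hintX
  refine hch.trans ?_
  apply mul_le_mul_of_nonneg_left _ (Real.exp_pos _).le
  -- bound the mgf
  have hmgf : ProbabilityTheory.mgf (fun ω => ∑ i ∈ R, d i * W i ω) ℙ β
      = ∫ ω, Real.exp (∑ i ∈ R, (β * d i) * W i ω) ∂ℙ := by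
    unfold ProbabilityTheory.mgf
    apply integral_congr_ae
    filter_upwards with ω
    rw [Finset.mul_sum]
    congr 1
    exact Finset.sum_congr rfl fun i _ => by ring
  rw [hmgf]
  have hsign' : (∀ i ∈ R, 0 ≤ β * d i) ∨ (∀ i ∈ R, β * d i ≤ 0) := by
    rcases hsign with h | h
    · exact Or.inl fun i hi => mul_nonneg hβ (h i hi)
    · exact Or.inr fun i hi => mul_nonpos_of_nonneg_of_nonpos hβ (h i hi)
  calc ∫ ω, Real.exp (∑ i ∈ R, (β * d i) * W i ω) ∂ℙ
      ≤ ∏ i ∈ R, ∫ ω, Real.exp ((β * d i) * W i ω) ∂ℙ :=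
        prodBound ℙ W hNA hmeas hexpint R _ hsign'
    _ ≤ ∏ i ∈ R, Real.exp (2 * K₀ * (β * d i) ^ 2) := by
        apply Finset.prod_le_prod
        · exact fun i _ => integral_nonneg fun ω => (Real.exp_pos _).le
        · exact fun i _ => (mgf_single ℙ (W i) (hmeas i) (hWint i) (hmean i) K₀ hK₀
            (hexpint i) (hexp i) (β * d i)).2
    _ = Real.exp (∑ i ∈ R, 2 * K₀ * (β * d i) ^ 2) := (Real.exp_sum R _).symm
    _ = Real.exp (2 * K₀ * β ^ 2 * ∑ i ∈ R, d i ^ 2) := by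
        rw [Finset.mul_sum]
        congr 1
        exact Finset.sum_congr rfl fun i _ => by ring

/-- Hoeffding-type inequality under negative association: if `W₁, …, W_N` are
negatively associated, mean zero, with `E[exp(Wᵢ²)] ≤ K₀`, then for every `a ≥ 0` and
reals `γᵢ`, `P(|∑ Wᵢγᵢ| ≥ a) ≤ C₃ exp(−a²/(C₄ ∑γᵢ²))` with `C₃ = 4` and
`C₄ = 32(1 + σ₀²) = 32 K₀` (where `σ₀² = K₀ − 1`). -/
theorem stmt_6 {Ω : Type*} [MeasurableSpace Ω] (ℙ : Measure Ω) [IsProbabilityMeasure ℙ]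
    {N : ℕ} (W : Fin N → Ω → ℝ) (hNA : NegAssoc ℙ W)
    (hmeas : ∀ i, Measurable (W i)) (hWint : ∀ i, Integrable (W i) ℙ)
    (hmean : ∀ i, ∫ ω, W i ω ∂ℙ = 0)
    (K₀ : ℝ) (hK₀ : 1 ≤ K₀)
    (hexpint : ∀ i, Integrable (fun ω => Real.exp ((W i ω) ^ 2)) ℙ)
    (hexp : ∀ i, ∫ ω, Real.exp ((W i ω) ^ 2) ∂ℙ ≤ K₀) :
    ∀ a : ℝ, 0 ≤ a → ∀ γ : Fin N → ℝ,
      (ℙ {ω | a ≤ |∑ i, W i ω * γ i|}).toReal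
        ≤ 4 * Real.exp (-a ^ 2 / (32 * K₀ * ∑ i, (γ i) ^ 2)) := by
  intro a ha γ
  classical
  have hK₀pos : (0:ℝ) < K₀ := lt_of_lt_of_le one_pos hK₀
  set G : ℝ := ∑ i, (γ i) ^ 2 with hG
  have hGnn : 0 ≤ G := Finset.sum_nonneg fun i _ => sq_nonneg _
  have htriv : (ℙ {ω | a ≤ |∑ i, W i ω * γ i|}).toReal ≤ 1 := by
    rw [← ENNReal.toReal_one]
    exact ENNReal.toReal_mono ENNReal.one_ne_top prob_le_one
  rcases eq_or_lt_of_le hGnn with hG0 | hGpos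
  · -- G = 0 case: RHS is 4 * exp 0 = 4
    rw [← hG0]
    norm_num
    linarith [htriv]
  -- main case
  set β : ℝ := a / (8 * K₀ * G) with hβdef
  have hden : (0:ℝ) < 8 * K₀ * G := by positivity
  have hβ : 0 ≤ β := div_nonneg ha hden.le
  set P : Finset (Fin N) := Finset.univ.filter (fun i => 0 ≤ γ i) with hP
  set Q : Finset (Fin N) := Finset.univ.filter (fun i => ¬ 0 ≤ γ i) with hQ
  set E1 : Set Ω := {ω | a / 2 ≤ ∑ i ∈ P, γ i * W i ω} with hE1
  set E2 : Set Ω := {ω | a / 2 ≤ ∑ i ∈ Q, γ i * W i ω} with hE2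
  set E3 : Set Ω := {ω | a / 2 ≤ ∑ i ∈ P, (-γ i) * W i ω} with hE3
  set E4 : Set Ω := {ω | a / 2 ≤ ∑ i ∈ Q, (-γ i) * W i ω} with hE4
  have hsub : {ω | a ≤ |∑ i, W i ω * γ i|} ⊆ E1 ∪ E2 ∪ E3 ∪ E4 := by
    intro ω hω
    simp only [Set.mem_setOf_eq] at hω
    have hsplit : ∑ i, W i ω * γ i
        = (∑ i ∈ P, γ i * W i ω) + ∑ i ∈ Q, γ i * W i ω := by
      rw [hP, hQ, Finset.sum_filter_add_sum_filter_not]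
      exact Finset.sum_congr rfl fun i _ => mul_comm _ _
    have hneg : ∀ R : Finset (Fin N),
        ∑ i ∈ R, (-γ i) * W i ω = -∑ i ∈ R, γ i * W i ω := by
      intro R
      rw [← Finset.sum_neg_distrib]
      exact Finset.sum_congr rfl fun i _ => by ring
    rcases le_abs.mp hω with h | h
    · rw [hsplit] at h
      by_cases h1 : a / 2 ≤ ∑ i ∈ P, γ i * W i ω
      · exact Or.inl (Or.inl (Or.inl h1))
      · refine Or.inl (Or.inl (Or.inr ?_))
        simp only [hE2, Set.mem_setOf_eq]
        push_neg at h1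
        linarith
    · rw [hsplit] at h
      by_cases h1 : a / 2 ≤ ∑ i ∈ P, (-γ i) * W i ω
      · exact Or.inl (Or.inr h1)
      · refine Or.inr ?_
        simp only [hE4, Set.mem_setOf_eq]
        rw [hneg] at h1 ⊢
        push_neg at h1
        linarith
  have hPs : ∀ i ∈ P, 0 ≤ γ i := fun i hi => (Finset.mem_filter.mp hi).2
  have hQs : ∀ i ∈ Q, γ i ≤ 0 := fun i hi => le_of_not_ge (Finset.mem_filter.mp hi).2
  -- single tail estimate
  have hone : ∀ (R : Finset (Fin N)) (d : Fin N → ℝ),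
      ((∀ i ∈ R, 0 ≤ d i) ∨ (∀ i ∈ R, d i ≤ 0)) → (∀ i, d i ^ 2 = γ i ^ 2) →
      (ℙ {ω | a / 2 ≤ ∑ i ∈ R, d i * W i ω}).toReal
        ≤ Real.exp (-a ^ 2 / (32 * K₀ * G)) := by
    intro R d hs hdg
    have h1 := tailBound ℙ W hNA hmeas hWint hmean K₀ hK₀ hexpint hexp R d hs β (a / 2) hβ
    refine h1.trans ?_
    rw [← Real.exp_add]
    apply Real.exp_le_exp.mpr
    have hsumle : ∑ i ∈ R, d i ^ 2 ≤ G := by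
      rw [hG]
      calc ∑ i ∈ R, d i ^ 2 = ∑ i ∈ R, γ i ^ 2 :=
            Finset.sum_congr rfl fun i _ => hdg i
        _ ≤ ∑ i, γ i ^ 2 :=
            Finset.sum_le_sum_of_subset_of_nonneg (Finset.subset_univ R)
              (fun i _ _ => sq_nonneg _)
    have hcoef : 0 ≤ 2 * K₀ * β ^ 2 := by positivity
    have h2 : 2 * K₀ * β ^ 2 * ∑ i ∈ R, d i ^ 2 ≤ 2 * K₀ * β ^ 2 * G :=
      mul_le_mul_of_nonneg_left hsumle hcoef
    have h3 : -β * (a / 2) + 2 * K₀ * β ^ 2 * G = -a ^ 2 / (32 * K₀ * G) := by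
      rw [hβdef]
      field_simp
      ring
    linarith
  have hb1 := hone P γ (Or.inl hPs) (fun i => rfl)
  have hb2 := hone Q γ (Or.inr hQs) (fun i => rfl)
  have hb3 := hone P (fun i => -γ i) (Or.inr fun i hi => neg_nonpos.mpr (hPs i hi))
    (fun i => neg_sq _)
  have hb4 := hone Q (fun i => -γ i) (Or.inl fun i hi => neg_nonneg.mpr (hQs i hi))
    (fun i => neg_sq _)
  have hmle : ℙ {ω | a ≤ |∑ i, W i ω * γ i|} ≤ ℙ E1 + ℙ E2 + ℙ E3 + ℙ E4 :=
    calc ℙ {ω | a ≤ |∑ i, W i ω * γ i|} ≤ ℙ (E1 ∪ E2 ∪ E3 ∪ E4) := measure_mono hsub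
      _ ≤ ℙ (E1 ∪ E2 ∪ E3) + ℙ E4 := measure_union_le _ _
      _ ≤ (ℙ (E1 ∪ E2) + ℙ E3) + ℙ E4 := by
          gcongr
          exact measure_union_le _ _
      _ ≤ ((ℙ E1 + ℙ E2) + ℙ E3) + ℙ E4 := by
          gcongr
          exact measure_union_le _ _
  have hne : ∀ s : Set Ω, ℙ s ≠ ⊤ := fun s => measure_ne_top ℙ s
  have htos : (ℙ {ω | a ≤ |∑ i, W i ω * γ i|}).toReal
      ≤ (ℙ E1).toReal + (ℙ E2).toReal + (ℙ E3).toReal + (ℙ E4).toReal := by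
    have := ENNReal.toReal_mono (by
      simp [ENNReal.add_ne_top, hne E1, hne E2, hne E3, hne E4]) hmle
    rwa [ENNReal.toReal_add (by simp [ENNReal.add_ne_top, hne E1, hne E2, hne E3]) (hne E4),
      ENNReal.toReal_add (by simp [ENNReal.add_ne_top, hne E1, hne E2]) (hne E3),
      ENNReal.toReal_add (hne E1) (hne E2)] at this
  calc (ℙ {ω | a ≤ |∑ i, W i ω * γ i|}).toReal
      ≤ (ℙ E1).toReal + (ℙ E2).toReal + (ℙ E3).toReal + (ℙ E4).toReal := htos
    _ ≤ Real.exp (-a ^ 2 / (32 * K₀ * G)) + Real.exp (-a ^ 2 / (32 * K₀ * G))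
        + Real.exp (-a ^ 2 / (32 * K₀ * G)) + Real.exp (-a ^ 2 / (32 * K₀ * G)) := by
        exact add_le_add (add_le_add (add_le_add hb1 hb2) hb3) hb4
    _ = 4 * Real.exp (-a ^ 2 / (32 * K₀ * G)) := by ring
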